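/- Let x₁, x₂, x₃ ∈ ℝ with x₁x₂ and x₃ both nonzero and of the same sign, and let δ ∈ ℝ with |δ| ≤ ε for some ε > 0. Define b(x₁,x₂,x₃) = (x₁, x₃/x₁). Then x₁ · (x₃/x₁) = x₃ exactly, the first component of b is unchanged (x₁ carries zero backward error), and RP(x₂, x₃/x₁) ≤ RP(x₁x₂e^δ, x₃) + ε. -/

import Mathlib

open scoped ENNReal

/-- Olver's relative precision metric: `|ln(x/y)|` when `x` and `y` are
nonzero with the same sign, `0` when `x = y = 0`, and `∞` otherwise. -/
noncomputable def RP (x y : ℝ) : ℝ≥0∞ :=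
  if 0 < x * y then ENNReal.ofReal |Real.log (x / y)|
  else if x = 0 ∧ y = 0 then 0
  else ⊤

/-- Backward error lens properties for multiplication by a discrete variable
(the DMul rule): the backward map `b(x₁,x₂,x₃) = (x₁, x₃/x₁)` recovers `x₃`
exactly, the discrete input `x₁` carries zero backward error, and all the
backward error `RP(x₁x₂e^δ, x₃) + ε` is assigned to `x₂`. -/
theorem dmul_lens_backward (x₁ x₂ x₃ δ ε : ℝ)
    (hsign : 0 < (x₁ * x₂) * x₃) (hδ : |δ| ≤ ε) (hε : 0 < ε) :
    x₁ * (x₃ / x₁) = x₃ ∧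
    RP x₁ x₁ = 0 ∧
    RP x₂ (x₃ / x₁) ≤ RP (x₁ * x₂ * Real.exp δ) x₃ + ENNReal.ofReal ε := by
  have hx12 : x₁ * x₂ ≠ 0 := by
    intro h; rw [h] at hsign; simp at hsign
  have hx1 : x₁ ≠ 0 := fun h => hx12 (by rw [h, zero_mul])
  have hx3 : x₃ ≠ 0 := by
    intro h; rw [h] at hsign; simp at hsign
  refine ⟨by field_simp, ?_, ?_⟩
  · rw [RP, if_pos (mul_self_pos.mpr hx1)]
    rw [div_self hx1, Real.log_one, abs_zero, ENNReal.ofReal_zero]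
  · have hpos1 : 0 < x₂ * (x₃ / x₁) := by
      have : x₂ * (x₃ / x₁) = ((x₁ * x₂) * x₃) / (x₁ * x₁) := by field_simp
      rw [this]
      exact div_pos hsign (mul_self_pos.mpr hx1)
    have hpos2 : 0 < (x₁ * x₂ * Real.exp δ) * x₃ := by
      have := Real.exp_pos δ
      nlinarith [hsign]
    rw [RP, RP, if_pos hpos1, if_pos hpos2]
    have hq : x₂ / (x₃ / x₁) = x₁ * x₂ / x₃ := by field_simp
    have hlog : Real.log (x₁ * x₂ * Real.exp δ / x₃) = Real.log (x₁ * x₂ / x₃) + δ := by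
      rw [show x₁ * x₂ * Real.exp δ / x₃ = (x₁ * x₂ / x₃) * Real.exp δ by ring,
        Real.log_mul (div_ne_zero hx12 hx3) (Real.exp_ne_zero δ), Real.log_exp]
    rw [hq, hlog]
    calc ENNReal.ofReal |Real.log (x₁ * x₂ / x₃)|
        ≤ ENNReal.ofReal (|Real.log (x₁ * x₂ / x₃) + δ| + ε) := by
          apply ENNReal.ofReal_le_ofReal
          calc |Real.log (x₁ * x₂ / x₃)| = |Real.log (x₁ * x₂ / x₃) + δ + (-δ)| := by ring_nf
        _ ≤ |Real.log (x₁ * x₂ / x₃) + δ| + |(-δ)| := abs_add_le _ _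
        _ ≤ |Real.log (x₁ * x₂ / x₃) + δ| + ε := by rw [abs_neg]; linarith
      _ = ENNReal.ofReal |Real.log (x₁ * x₂ / x₃) + δ| + ENNReal.ofReal ε :=
          ENNReal.ofReal_add (abs_nonneg _) hε.le
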